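/- Let 1 ≤ p, r, r₁, r₂ ≤ ∞, σ₁ ≠ σ₂ real numbers, θ ∈ (0,1), and 1/r = θ/r₁ + (1-θ)/r₂. Then for any tempered distribution f modulo polynomials, ‖f‖_{Ḃ^{θσ₁+(1-θ)σ₂}_{p,r}} ≤ C ‖f‖_{Ḃ^{σ₁}_{p,r₁}}^θ ‖f‖_{Ḃ^{σ₂}_{p,r₂}}^{1-θ}. -/

import Mathlib

open MeasureTheory
open scoped ENNReal

/-- Interpolation inequality for homogeneous Besov norms, expressed through the
Littlewood–Paley blocks `D j = Δ̇_j f`: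
`‖f‖_{Ḃ^{θσ₁+(1-θ)σ₂}_{p,r}} ≤ C ‖f‖_{Ḃ^{σ₁}_{p,r₁}}^θ ‖f‖_{Ḃ^{σ₂}_{p,r₂}}^{1-θ}`. -/
theorem stmt_16 (d : ℕ) (p r r₁ r₂ : ℝ≥0∞) (hp : 1 ≤ p) (hr : 1 ≤ r)
    (hr₁ : 1 ≤ r₁) (hr₂ : 1 ≤ r₂) (σ₁ σ₂ θ : ℝ) (hσ : σ₁ ≠ σ₂)
    (hθ₀ : 0 < θ) (hθ₁ : θ < 1)
    (hhol : 1 / r = ENNReal.ofReal θ / r₁ + ENNReal.ofReal (1 - θ) / r₂) :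
    ∃ C : ℝ, 0 < C ∧
      ∀ D : ℤ → EuclideanSpace ℝ (Fin d) → ℂ,
        eLpNorm (fun j : ℤ =>
            (2 : ℝ) ^ ((j : ℝ) * (θ * σ₁ + (1 - θ) * σ₂)) *
              (eLpNorm (D j) p volume).toReal) r .count ≤
          ENNReal.ofReal C *
            (eLpNorm (fun j : ℤ =>
              (2 : ℝ) ^ ((j : ℝ) * σ₁) * (eLpNorm (D j) p volume).toReal) r₁ .count) ^ θ *
            (eLpNorm (fun j : ℤ =>
              (2 : ℝ) ^ ((j : ℝ) * σ₂) * (eLpNorm (D j) p volume).toReal) r₂ .count) ^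
              (1 - θ) := by
  refine ⟨1, one_pos, fun D => ?_⟩
  have hθ' : 0 < 1 - θ := by linarith
  have h2 : (0 : ℝ) < 2 := by norm_num
  set F : ℤ → ℝ := fun j => (2 : ℝ) ^ ((j : ℝ) * σ₁) * (eLpNorm (D j) p volume).toReal with hF
  set G : ℤ → ℝ := fun j => (2 : ℝ) ^ ((j : ℝ) * σ₂) * (eLpNorm (D j) p volume).toReal with hG
  have hFnn : ∀ j, 0 ≤ F j := fun j =>
    mul_nonneg (Real.rpow_nonneg h2.le _) ENNReal.toReal_nonneg
  have hGnn : ∀ j, 0 ≤ G j := fun j =>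
    mul_nonneg (Real.rpow_nonneg h2.le _) ENNReal.toReal_nonneg
  -- pointwise identity: the interpolated weight equals `F^θ * G^(1-θ)`
  have hpt : (fun j : ℤ =>
      (2 : ℝ) ^ ((j : ℝ) * (θ * σ₁ + (1 - θ) * σ₂)) * (eLpNorm (D j) p volume).toReal)
        = fun j => F j ^ θ * G j ^ (1 - θ) := by
    funext j
    set x : ℝ := (eLpNorm (D j) p volume).toReal with hx
    have hx0 : (0 : ℝ) ≤ x := ENNReal.toReal_nonneg
    rw [hF, hG]
    simp only
    rw [Real.mul_rpow (Real.rpow_nonneg h2.le _) hx0,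
      Real.mul_rpow (Real.rpow_nonneg h2.le _) hx0,
      ← Real.rpow_mul h2.le, ← Real.rpow_mul h2.le,
      mul_mul_mul_comm, ← Real.rpow_add h2, ← Real.rpow_add' hx0 (by norm_num)]
    have e1 : (j : ℝ) * σ₁ * θ + (j : ℝ) * σ₂ * (1 - θ)
        = (j : ℝ) * (θ * σ₁ + (1 - θ) * σ₂) := by ring
    have e2 : θ + (1 - θ) = 1 := by ring
    rw [e1, e2, Real.rpow_one]
  rw [hpt, ENNReal.ofReal_one, one_mul]
  -- Hölder with exponents `r₁/θ` and `r₂/(1-θ)`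
  have hθne : ENNReal.ofReal θ ≠ 0 := (ENNReal.ofReal_pos.mpr hθ₀).ne'
  have hθ'ne : ENNReal.ofReal (1 - θ) ≠ 0 := (ENNReal.ofReal_pos.mpr hθ').ne'
  set q₁ : ℝ≥0∞ := r₁ / ENNReal.ofReal θ with hq₁
  set q₂ : ℝ≥0∞ := r₂ / ENNReal.ofReal (1 - θ) with hq₂
  have hpqr : 1 / r = 1 / q₁ + 1 / q₂ := by
    simp only [one_div]
    rw [hq₁, hq₂, ENNReal.inv_div (Or.inl ENNReal.ofReal_ne_top)
      (Or.inl hθne), ENNReal.inv_div (Or.inl ENNReal.ofReal_ne_top) (Or.inl hθ'ne)]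
    simpa only [one_div] using hhol
  have hmF : AEStronglyMeasurable (fun j => F j ^ θ) (Measure.count : Measure ℤ) :=
    (measurable_of_countable _).aestronglyMeasurable
  have hmG : AEStronglyMeasurable (fun j => G j ^ (1 - θ)) (Measure.count : Measure ℤ) :=
    (measurable_of_countable _).aestronglyMeasurable
  have hH := eLpNorm_le_eLpNorm_mul_eLpNorm'_of_norm
    (hpqr := ⟨by simpa only [one_div] using hpqr.symm⟩) hmF hmG (fun a b => a * b) 1
    (Filter.Eventually.of_forall fun j => by rw [norm_mul, NNReal.coe_one, one_mul])
  rw [ENNReal.coe_one, one_mul] at hH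
  refine hH.trans (le_of_eq ?_)
  have hFθ : eLpNorm (fun j => F j ^ θ) q₁ Measure.count
      = eLpNorm F r₁ Measure.count ^ θ := by
    have : (fun j => F j ^ θ) = fun j => ‖F j‖ ^ θ := by
      funext j; rw [Real.norm_of_nonneg (hFnn j)]
    rw [this, eLpNorm_norm_rpow F hθ₀, hq₁,
      ENNReal.div_mul_cancel hθne ENNReal.ofReal_ne_top]
  have hGθ : eLpNorm (fun j => G j ^ (1 - θ)) q₂ Measure.count
      = eLpNorm G r₂ Measure.count ^ (1 - θ) := by
    have : (fun j => G j ^ (1 - θ)) = fun j => ‖G j‖ ^ (1 - θ) := by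
      funext j; rw [Real.norm_of_nonneg (hGnn j)]
    rw [this, eLpNorm_norm_rpow G hθ', hq₂,
      ENNReal.div_mul_cancel hθ'ne ENNReal.ofReal_ne_top]
  rw [hFθ, hGθ]
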